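/- arXiv:2412.20533 — 2 statements merged into one kernel-verified Lean document; each statement's English description precedes it below -/
import Mathlib

section
/- Let (G,w) be a weighted graph and Φ a continuous triangle function satisfying the standing conditions. Suppose for every cycle C ⊆ G and every edge e ∈ E(C) the inequality w(e) ≤ w_Φ(C∖e) holds. Then w is Φ-pseudosemimetrizable: there exists a Φ-pseudosemimetric d on V(G) with d(u,v) = w({u,v}) for all edges {u,v} ∈ E(G). -/
open scoped NNReal
open SimpleGraph

/-- Iterated triangle function: `PhiStar Φ x [y₁,...,yₖ] = Φ*(x, y₁, ..., yₖ)`. -/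
def PhiStar (Φ : ℝ≥0 → ℝ≥0 → ℝ≥0) : ℝ≥0 → List ℝ≥0 → ℝ≥0
  | x, [] => x
  | x, y :: l => Φ x (PhiStar Φ y l)

/-- `Φ`-weight of a (possibly empty) list of weights. -/
def listPhi (Φ : ℝ≥0 → ℝ≥0 → ℝ≥0) : List ℝ≥0 → ℝ≥0
  | [] => 0
  | x :: l => PhiStar Φ x l

/-- `d` is a `Φ`-pseudosemimetric: symmetric, vanishing on the diagonal, and satisfying
the generalized triangle inequality with triangle function `Φ`. -/
def IsPseudoSemimetricWith {X : Type*} (Φ : ℝ≥0 → ℝ≥0 → ℝ≥0) (d : X → X → ℝ≥0) : Prop :=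
  (∀ x y, d x y = d y x) ∧ (∀ x, d x x = 0) ∧ ∀ x y z, d x y ≤ Φ (d x z) (d y z)

/-- Standing conditions on a continuous triangle function `Φ`. -/
def Standing (Φ : ℝ≥0 → ℝ≥0 → ℝ≥0) : Prop :=
  Continuous (fun q : ℝ≥0 × ℝ≥0 => Φ q.1 q.2) ∧
  (∀ x y, Φ x y = Φ y x) ∧
  (∀ a, Monotone (Φ a)) ∧ (∀ b, Monotone fun a => Φ a b) ∧
  Φ 0 0 = 0 ∧
  (∀ x y z, Φ x (Φ y z) = Φ z (Φ x y)) ∧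
  (∀ (a b c : ℝ≥0) (as bs cs : List ℝ≥0),
      (a ::ₘ (as : Multiset ℝ≥0)) ≤ (b ::ₘ (bs : Multiset ℝ≥0)) + (c ::ₘ (cs : Multiset ℝ≥0)) →
      PhiStar Φ a as ≤ Φ (PhiStar Φ b bs) (PhiStar Φ c cs)) ∧
  (∀ a b, max a b ≤ Φ a b)

/-- The shortest-`Φ`-path function `d_Φ^w`. -/
noncomputable def dPhi {V : Type*} (G : SimpleGraph V) (Φ : ℝ≥0 → ℝ≥0 → ℝ≥0)
    (w : Sym2 V → ℝ≥0) (u v : V) : ℝ≥0 :=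
  sInf {x | ∃ p : G.Walk u v, p.IsPath ∧ listPhi Φ (p.edges.map w) = x}

variable {Φ : ℝ≥0 → ℝ≥0 → ℝ≥0}

section lemmas
variable (hmax : ∀ a b, max a b ≤ Φ a b)
include hmax

theorem le_phiStar_left (x : ℝ≥0) (l : List ℝ≥0) : x ≤ PhiStar Φ x l := by
  cases l with
  | nil => exact le_rfl
  | cons y t => exact le_trans (le_max_left _ _) (hmax _ _)

theorem le_phiStar (x : ℝ≥0) (l : List ℝ≥0) : ∀ a ∈ l, a ≤ PhiStar Φ x l := by
  induction l generalizing x with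
  | nil => simp
  | cons y t ih =>
      intro a ha
      rcases List.mem_cons.mp ha with rfl | ha
      · exact le_trans (le_phiStar_left hmax a t) (le_trans (le_max_right _ _) (hmax _ _))
      · exact le_trans (ih y a ha) (le_trans (le_max_right _ _) (hmax _ _))

theorem le_listPhi {l : List ℝ≥0} {a : ℝ≥0} (ha : a ∈ l) : a ≤ listPhi Φ l := by
  cases l with
  | nil => simp at ha
  | cons x t =>
      rcases List.mem_cons.mp ha with rfl | ha
      · exact le_phiStar_left hmax a t
      · exact le_phiStar hmax x t a ha

theorem listPhi_cons_le (a : ℝ≥0) (l : List ℝ≥0) : listPhi Φ l ≤ listPhi Φ (a :: l) := by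
  cases l with
  | nil => simp [listPhi]
  | cons x t =>
      show PhiStar Φ x t ≤ Φ a (PhiStar Φ x t)
      exact le_trans (le_max_right _ _) (hmax _ _)

end lemmas

section perm
variable (hcomm : ∀ x y, Φ x y = Φ y x) (hrot : ∀ x y z, Φ x (Φ y z) = Φ z (Φ x y))
include hcomm hrot

theorem listPhi_swap (x y : ℝ≥0) (l : List ℝ≥0) :
    listPhi Φ (x :: y :: l) = listPhi Φ (y :: x :: l) := by
  cases l with
  | nil => exact hcomm x y
  | cons z t =>
      show Φ x (Φ y (PhiStar Φ z t)) = Φ y (Φ x (PhiStar Φ z t))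
      rw [hrot, hrot y x, hcomm x y]

theorem listPhi_perm {l l' : List ℝ≥0} (h : l.Perm l') : listPhi Φ l = listPhi Φ l' := by
  induction h with
  | nil => rfl
  | cons a _ ih =>
      rename_i l₁ l₂ hp
      cases l₁ with
      | nil => rw [hp.symm.eq_nil]
      | cons b t =>
          cases l₂ with
          | nil => exact absurd hp.eq_nil (by simp)
          | cons c s =>
              show Φ a (listPhi Φ (b :: t)) = Φ a (listPhi Φ (c :: s))
              rw [show listPhi Φ (b :: t) = listPhi Φ (c :: s) from ih]
  | swap x y l => exact listPhi_swap hcomm hrot y x l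
  | trans _ _ ih1 ih2 => exact ih1.trans ih2
end perm

theorem listPhi_append_le (hmax : ∀ a b, max a b ≤ Φ a b) (t l : List ℝ≥0) :
    listPhi Φ l ≤ listPhi Φ (t ++ l) := by
  induction t with
  | nil => exact le_rfl
  | cons a s ih => exact le_trans ih (listPhi_cons_le hmax a (s ++ l))

theorem listPhi_mono (hmax : ∀ a b, max a b ≤ Φ a b) (hcomm : ∀ x y, Φ x y = Φ y x)
    (hrot : ∀ x y z, Φ x (Φ y z) = Φ z (Φ x y)) {l l' : List ℝ≥0}
    (h : (↑l : Multiset ℝ≥0) ≤ (↑l' : Multiset ℝ≥0)) : listPhi Φ l ≤ listPhi Φ l' := by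
  obtain ⟨d, hd⟩ := Multiset.le_iff_exists_add.mp h
  have h1 : (↑l' : Multiset ℝ≥0) = ↑(l ++ d.toList) := by rw [hd, ← Multiset.coe_toList d, Multiset.coe_add, Multiset.coe_toList]
  have hperm : l'.Perm (d.toList ++ l) :=
    (Multiset.coe_eq_coe.mp h1).trans List.perm_append_comm
  rw [listPhi_perm hcomm hrot hperm]
  exact listPhi_append_le hmax d.toList l

theorem listPhi_sub (hmax : ∀ a b, max a b ≤ Φ a b) (hcomm : ∀ x y, Φ x y = Φ y x)
    (hrot : ∀ x y z, Φ x (Φ y z) = Φ z (Φ x y))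
    (hsub : ∀ (a b c : ℝ≥0) (as bs cs : List ℝ≥0),
      (a ::ₘ (as : Multiset ℝ≥0)) ≤ (b ::ₘ (bs : Multiset ℝ≥0)) + (c ::ₘ (cs : Multiset ℝ≥0)) →
      PhiStar Φ a as ≤ Φ (PhiStar Φ b bs) (PhiStar Φ c cs))
    {la lb lc : List ℝ≥0}
    (h : (↑la : Multiset ℝ≥0) ≤ (↑lb : Multiset ℝ≥0) + (↑lc : Multiset ℝ≥0)) :
    listPhi Φ la ≤ Φ (listPhi Φ lb) (listPhi Φ lc) := by
  cases la with
  | nil => exact zero_le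
  | cons a as =>
    cases lb with
    | nil =>
        have h' : (↑(a :: as) : Multiset ℝ≥0) ≤ (↑lc : Multiset ℝ≥0) := by simpa using h
        calc listPhi Φ (a :: as) ≤ listPhi Φ lc := listPhi_mono hmax hcomm hrot h'
          _ ≤ Φ (listPhi Φ []) (listPhi Φ lc) := by
              simpa [listPhi] using le_trans (le_max_right 0 (listPhi Φ lc)) (hmax _ _)
    | cons b bs =>
      cases lc with
      | nil =>
          have h' : (↑(a :: as) : Multiset ℝ≥0) ≤ (↑(b :: bs) : Multiset ℝ≥0) := by simpa using h
          calc listPhi Φ (a :: as) ≤ listPhi Φ (b :: bs) := listPhi_mono hmax hcomm hrot h'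
            _ ≤ Φ (listPhi Φ (b :: bs)) (listPhi Φ []) := by
                simpa [listPhi] using le_trans (le_max_left (listPhi Φ (b :: bs)) 0) (hmax _ _)
      | cons c cs =>
          exact hsub a b c as bs cs (by simpa using h)

theorem coe_le_of_nodup_subset {α : Type*} {l l' : List α} (hn : l.Nodup) (hs : l ⊆ l') :
    (↑l : Multiset α) ≤ (↑l' : Multiset α) := by
  classical
  rw [Multiset.le_iff_count]
  intro a
  simp only [Multiset.coe_count]
  by_cases h : a ∈ l
  · exact le_trans (List.nodup_iff_count_le_one.mp hn a)
      (List.count_pos_iff.mpr (hs h))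
  · simp [List.count_eq_zero_of_not_mem h]

theorem le_phi_csInf (hcont : Continuous (fun q : ℝ≥0 × ℝ≥0 => Φ q.1 q.2))
    {S T : Set ℝ≥0} (hS : S.Nonempty) (hT : T.Nonempty) {d : ℝ≥0}
    (h : ∀ s ∈ S, ∀ t ∈ T, d ≤ Φ s t) : d ≤ Φ (sInf S) (sInf T) := by
  have hSc : sInf S ∈ closure S := csInf_mem_closure hS (OrderBot.bddBelow S)
  have hTc : sInf T ∈ closure T := csInf_mem_closure hT (OrderBot.bddBelow T)
  have hC : IsClosed {p : ℝ≥0 × ℝ≥0 | d ≤ Φ p.1 p.2} := isClosed_le continuous_const hcont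
  have hsub : closure (S ×ˢ T) ⊆ {p : ℝ≥0 × ℝ≥0 | d ≤ Φ p.1 p.2} :=
    closure_minimal (fun p hp => h p.1 hp.1 p.2 hp.2) hC
  exact hsub (show ((sInf S, sInf T) : ℝ≥0 × ℝ≥0) ∈ closure (S ×ˢ T) by
    rw [closure_prod_eq]; exact Set.mk_mem_prod hSc hTc)

section graph
variable {V : Type*} {G : SimpleGraph V} {w : Sym2 V → ℝ≥0}

theorem dPhi_le {u v : V} (p : G.Walk u v) (hp : p.IsPath) :
    dPhi G Φ w u v ≤ listPhi Φ (p.edges.map w) :=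
  csInf_le (OrderBot.bddBelow _) ⟨p, hp, rfl⟩

theorem dPhi_set_nonempty {u v : V} (h : G.Reachable u v) :
    {x | ∃ p : G.Walk u v, p.IsPath ∧ listPhi Φ (p.edges.map w) = x}.Nonempty := by
  classical
  obtain ⟨p⟩ := h
  exact ⟨_, p.bypass, p.bypass_isPath, rfl⟩

theorem dPhi_self (x : V) : dPhi G Φ w x x = 0 := by
  refine le_antisymm ?_ zero_le
  have := dPhi_le (Φ := Φ) (w := w) (SimpleGraph.Walk.nil : G.Walk x x) SimpleGraph.Walk.IsPath.nil
  simpa [listPhi] using this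

theorem dPhi_symm (hcomm : ∀ x y, Φ x y = Φ y x) (hrot : ∀ x y z, Φ x (Φ y z) = Φ z (Φ x y))
    (u v : V) : dPhi G Φ w u v = dPhi G Φ w v u := by
  unfold dPhi
  congr 1
  ext x
  constructor
  · rintro ⟨p, hp, rfl⟩
    refine ⟨p.reverse, hp.reverse, ?_⟩
    rw [SimpleGraph.Walk.edges_reverse, List.map_reverse]
    exact listPhi_perm hcomm hrot (List.reverse_perm _)
  · rintro ⟨p, hp, rfl⟩
    refine ⟨p.reverse, hp.reverse, ?_⟩
    rw [SimpleGraph.Walk.edges_reverse, List.map_reverse]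
    exact listPhi_perm hcomm hrot (List.reverse_perm _)

theorem dPhi_triangle (hcont : Continuous (fun q : ℝ≥0 × ℝ≥0 => Φ q.1 q.2))
    (hmax : ∀ a b, max a b ≤ Φ a b) (hcomm : ∀ x y, Φ x y = Φ y x)
    (hrot : ∀ x y z, Φ x (Φ y z) = Φ z (Φ x y))
    (hsub : ∀ (a b c : ℝ≥0) (as bs cs : List ℝ≥0),
      (a ::ₘ (as : Multiset ℝ≥0)) ≤ (b ::ₘ (bs : Multiset ℝ≥0)) + (c ::ₘ (cs : Multiset ℝ≥0)) →
      PhiStar Φ a as ≤ Φ (PhiStar Φ b bs) (PhiStar Φ c cs))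
    {x y z : V} (hxz : G.Reachable x z) (hyz : G.Reachable y z) :
    dPhi G Φ w x y ≤ Φ (dPhi G Φ w x z) (dPhi G Φ w y z) := by
  classical
  apply le_phi_csInf hcont (dPhi_set_nonempty hxz) (dPhi_set_nonempty hyz)
  rintro s ⟨p, hp, rfl⟩ t ⟨q, hq, rfl⟩
  set r : G.Walk x y := p.append q.reverse with hr
  refine le_trans (dPhi_le r.bypass r.bypass_isPath) ?_
  apply listPhi_sub hmax hcomm hrot hsub
  have h1 : (↑r.bypass.edges : Multiset (Sym2 V)) ≤ ↑r.edges :=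
    coe_le_of_nodup_subset r.bypass_isPath.isTrail.edges_nodup r.edges_bypass_subset
  have h2 : (↑r.edges : Multiset (Sym2 V)) = ↑p.edges + ↑q.edges := by
    rw [hr, SimpleGraph.Walk.edges_append, SimpleGraph.Walk.edges_reverse]
    simp
    exact List.Perm.append_left _ (List.reverse_perm _)
  calc (↑(r.bypass.edges.map w) : Multiset ℝ≥0)
      = Multiset.map w ↑r.bypass.edges := by simp
    _ ≤ Multiset.map w ↑r.edges := Multiset.map_le_map h1
    _ = (↑(p.edges.map w) : Multiset ℝ≥0) + ↑(q.edges.map w) := by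
        rw [h2]; simp

theorem dPhi_adj (hmax : ∀ a b, max a b ≤ Φ a b)
    (hcyc : ∀ (a b : V) (h : G.Adj a b) (p : G.Walk b a),
      (SimpleGraph.Walk.cons h p).IsCycle →
      w s(a, b) ≤ listPhi Φ (p.edges.map w))
    {u v : V} (h : G.Adj u v) : dPhi G Φ w u v = w s(u, v) := by
  have hp1 : (SimpleGraph.Walk.cons h SimpleGraph.Walk.nil : G.Walk u v).IsPath := by
    rw [SimpleGraph.Walk.cons_isPath_iff]
    exact ⟨SimpleGraph.Walk.IsPath.nil, by simp [h.ne]⟩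
  refine le_antisymm ?_ ?_
  · refine le_trans (dPhi_le _ hp1) (le_of_eq ?_)
    simp [listPhi, PhiStar]
  · refine le_csInf ⟨_, _, hp1, rfl⟩ ?_
    rintro x ⟨p, hp, rfl⟩
    by_cases he : s(u, v) ∈ p.edges
    · exact le_listPhi hmax (List.mem_map_of_mem (f := w) he)
    · have hc : (SimpleGraph.Walk.cons h.symm p).IsCycle := by
        rw [SimpleGraph.Walk.cons_isCycle_iff]
        exact ⟨hp, by rwa [Sym2.eq_swap]⟩
      have := hcyc v u h.symm p hc
      rwa [Sym2.eq_swap] at this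

end graph

noncomputable def repV {V : Type*} (G : SimpleGraph V) (x : V) : V :=
  Quotient.mk G.reachableSetoid x |>.out

theorem repV_reach {V : Type*} (G : SimpleGraph V) (x : V) : G.Reachable x (repV G x) :=
  (Quotient.mk_out (s := G.reachableSetoid) x).symm

theorem repV_eq {V : Type*} (G : SimpleGraph V) {x y : V} (h : G.Reachable x y) :
    repV G x = repV G y := by
  unfold repV; congr 1; exact Quotient.sound h


/-- if for every cycle `C ⊆ G` and every edge `e ∈ E(C)` the inequality
`w(e) ≤ w_Φ(C∖e)` holds, then `w` is `Φ`-pseudosemimetrizable. -/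
theorem stmt_9 {V : Type*} (G : SimpleGraph V) (w : Sym2 V → ℝ≥0)
    (Φ : ℝ≥0 → ℝ≥0 → ℝ≥0) (hΦ : Standing Φ)
    (hcyc : ∀ (a b : V) (h : G.Adj a b) (p : G.Walk b a),
      (SimpleGraph.Walk.cons h p).IsCycle →
      w s(a, b) ≤ listPhi Φ (p.edges.map w)) :
    ∃ d : V → V → ℝ≥0, IsPseudoSemimetricWith Φ d ∧
      ∀ u v, G.Adj u v → d u v = w s(u, v) := by
  classical
  obtain ⟨hcont, hcomm, hmonoR, hmonoL, h00, hrot, hsub, hmax⟩ := hΦ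
  have hmono2 : ∀ {a a' b b' : ℝ≥0}, a ≤ a' → b ≤ b' → Φ a b ≤ Φ a' b' :=
    fun ha hb => le_trans (hmonoR _ hb) (hmonoL _ ha)
  have a1 : ∀ a t : ℝ≥0, a ≤ Φ a t := fun a t => le_trans (le_max_left a t) (hmax a t)
  have tern : ∀ a b c : ℝ≥0, Φ (Φ a b) c = Φ (Φ a c) b := by
    intro a b c
    rw [hcomm (Φ a b) c, hrot, hcomm c a, hcomm (Φ a c) b]
  have Dsymm := dPhi_symm (G := G) (w := w) hcomm hrot
  have Dtri := fun {x y z : V} (h1 : G.Reachable x z) (h2 : G.Reachable y z) =>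
    dPhi_triangle (w := w) hcont hmax hcomm hrot hsub h1 h2
  set D : V → V → ℝ≥0 := dPhi G Φ w with hD
  refine ⟨fun x y => if G.Reachable x y then D x y
      else Φ (D x (repV G x)) (D y (repV G y)), ⟨?_, ?_, ?_⟩, ?_⟩
  · intro x y
    dsimp only
    by_cases h : G.Reachable x y
    · rw [if_pos h, if_pos h.symm, Dsymm]
    · rw [if_neg h, if_neg (fun h' => h h'.symm), hcomm]
  · intro x
    dsimp only
    rw [if_pos (SimpleGraph.Reachable.refl x)]
    exact dPhi_self x
  · intro x y z
    dsimp only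
    by_cases hxy : G.Reachable x y <;> by_cases hxz : G.Reachable x z <;>
      by_cases hyz : G.Reachable y z
    -- case i
    · rw [if_pos hxy, if_pos hxz, if_pos hyz]
      exact Dtri hxz hyz
    · exact absurd (hxy.symm.trans hxz) hyz
    · exact absurd (hxy.trans hyz) hxz
    -- case ii
    · rw [if_pos hxy, if_neg hxz, if_neg hyz, ← repV_eq G hxy]
      calc D x y ≤ Φ (D x (repV G x)) (D y (repV G x)) :=
            Dtri (repV_reach G x) (hxy.symm.trans (repV_reach G x))
        _ ≤ Φ (Φ (D x (repV G x)) (D z (repV G z))) (Φ (D y (repV G x)) (D z (repV G z))) :=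
            hmono2 (a1 _ _) (a1 _ _)
    · exact absurd (hxz.trans hyz.symm) hxy
    -- case iii : x ~ z
    · rw [if_neg hxy, if_pos hxz, if_neg hyz, ← repV_eq G hxz, Dsymm z (repV G x)]
      calc Φ (D x (repV G x)) (D y (repV G y))
          ≤ Φ (Φ (D x z) (D (repV G x) z)) (D y (repV G y)) :=
            hmono2 (Dtri hxz ((repV_reach G x).symm.trans hxz)) le_rfl
        _ = Φ (D y (repV G y)) (Φ (D x z) (D (repV G x) z)) := hcomm _ _
        _ = Φ (D (repV G x) z) (Φ (D y (repV G y)) (D x z)) := hrot _ _ _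
        _ = Φ (D (repV G x) z) (Φ (D x z) (D y (repV G y))) := by rw [hcomm (D y (repV G y))]
        _ = Φ (D x z) (Φ (D y (repV G y)) (D (repV G x) z)) := (hrot _ _ _).symm
    -- case iv : y ~ z
    · rw [if_neg hxy, if_neg hxz, if_pos hyz, ← repV_eq G hyz, Dsymm z (repV G y)]
      calc Φ (D x (repV G x)) (D y (repV G y))
          ≤ Φ (D x (repV G x)) (Φ (D y z) (D (repV G y) z)) :=
            hmono2 le_rfl (Dtri hyz ((repV_reach G y).symm.trans hyz))
        _ = Φ (D (repV G y) z) (Φ (D x (repV G x)) (D y z)) := hrot _ _ _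
        _ = Φ (Φ (D x (repV G x)) (D y z)) (D (repV G y) z) := hcomm _ _
        _ = Φ (Φ (D x (repV G x)) (D (repV G y) z)) (D y z) := tern _ _ _
    -- case v
    · rw [if_neg hxy, if_neg hxz, if_neg hyz]
      exact hmono2 (a1 _ _) (a1 _ _)
  · intro u v h
    dsimp only
    rw [if_pos h.reachable]
    exact dPhi_adj hmax hcyc h
end

section
/- Let (G,w) be a connected weighted graph whose weight w is Φ-pseudosemimetrizable, with Φ a continuous triangle function satisfying the standing conditions. Then d_Φ^w is the greatest element of the set 𝔐_Φ^w of all Φ-pseudosemimetrics d on V(G) extending w (i.e., d(u,v) = w({u,v}) for all edges), with respect to pointwise order. Conversely, if 𝔐_Φ^w has a greatest element, then G is connected. -/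
open scoped NNReal
open SimpleGraph

lemma phiStar_of_ne_nil (Φ : ℝ≥0 → ℝ≥0 → ℝ≥0) (a : ℝ≥0) {l : List ℝ≥0} (hl : l ≠ []) :
    PhiStar Φ a l = Φ a (listPhi Φ l) := by
  cases l with
  | nil => exact absurd rfl hl
  | cons b t => rfl

lemma listPhi_perm_s10 (Φ : ℝ≥0 → ℝ≥0 → ℝ≥0) (hΦ : Standing Φ) {l₁ l₂ : List ℝ≥0}
    (h : l₁.Perm l₂) : listPhi Φ l₁ = listPhi Φ l₂ := by
  obtain ⟨-, hcomm, -, -, -, hW, -, -⟩ := hΦ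
  have hlc : ∀ a b c : ℝ≥0, Φ a (Φ b c) = Φ b (Φ a c) := fun a b c => by
    rw [hW a b c, hW b a c, hcomm a b]
  induction h with
  | nil => rfl
  | @cons x t₁ t₂ h ih =>
    rcases eq_or_ne t₁ [] with h0 | h0
    · subst h0
      have ht2 : t₂ = [] := h.symm.eq_nil
      subst ht2; rfl
    · have h0' : t₂ ≠ [] := by
        intro e; subst e; exact h0 h.eq_nil
      show PhiStar Φ x t₁ = PhiStar Φ x t₂
      rw [phiStar_of_ne_nil Φ x h0, phiStar_of_ne_nil Φ x h0', ih]
  | swap x y l =>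
    show PhiStar Φ y (x :: l) = PhiStar Φ x (y :: l)
    rcases eq_or_ne l [] with h0 | h0
    · subst h0; exact hcomm y x
    · show Φ y (PhiStar Φ x l) = Φ x (PhiStar Φ y l)
      rw [phiStar_of_ne_nil Φ x h0, phiStar_of_ne_nil Φ y h0, hlc]
  | trans _ _ ih1 ih2 => exact ih1.trans ih2

lemma d_le_walk {V : Type*} {G : SimpleGraph V} {Φ : ℝ≥0 → ℝ≥0 → ℝ≥0} (hΦ : Standing Φ)
    {w : Sym2 V → ℝ≥0} {d : V → V → ℝ≥0} (hd : IsPseudoSemimetricWith Φ d)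
    (hw : ∀ u v, G.Adj u v → d u v = w s(u, v)) :
    ∀ {x y : V} (p : G.Walk x y), d x y ≤ listPhi Φ (p.edges.map w) := by
  intro x y p
  induction p with
  | nil => simpa [listPhi] using le_of_eq (hd.2.1 _)
  | @cons a b c h q ih =>
    rw [Walk.edges_cons, List.map_cons]
    show d a c ≤ PhiStar Φ (w s(a, b)) (q.edges.map w)
    rcases hq : q.edges.map w with _ | ⟨u, L⟩
    · have hqe : q.edges = [] := by
        cases he : q.edges with
        | nil => rfl
        | cons _ _ => rw [he] at hq; simp at hq
      obtain rfl : b = c :=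
        Walk.eq_of_length_eq_zero (by rw [← Walk.length_edges, hqe]; rfl)
      show d a b ≤ w s(a, b)
      exact le_of_eq (hw a b h)
    · have he : PhiStar Φ (w s(a, b)) (u :: L) = Φ (w s(a, b)) (listPhi Φ (u :: L)) := rfl
      rw [he, ← hq]
      calc d a c ≤ Φ (d a b) (d c b) := hd.2.2 a c b
        _ ≤ Φ (w s(a, b)) (listPhi Φ (q.edges.map w)) := by
            rw [hw a b h]
            exact hΦ.2.2.1 _ (le_of_eq_of_le (hd.1 c b) ih)

/-- if `G` is connected and `w` is `Φ`-pseudosemimetrizable, then `d_Φ^w`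
is the greatest element of the set `𝔐_Φ^w` of `Φ`-pseudosemimetrics extending `w`;
conversely, if `𝔐_Φ^w` has a greatest element, then `G` is connected. -/
theorem stmt_10 {V : Type*} (G : SimpleGraph V) (w : Sym2 V → ℝ≥0)
    (Φ : ℝ≥0 → ℝ≥0 → ℝ≥0) (hΦ : Standing Φ)
    (hmetr : ∃ d : V → V → ℝ≥0, IsPseudoSemimetricWith Φ d ∧
      ∀ u v, G.Adj u v → d u v = w s(u, v)) :
    (G.Preconnected →
      (IsPseudoSemimetricWith Φ (dPhi G Φ w) ∧
        (∀ u v, G.Adj u v → dPhi G Φ w u v = w s(u, v)) ∧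
        ∀ d : V → V → ℝ≥0, IsPseudoSemimetricWith Φ d →
          (∀ u v, G.Adj u v → d u v = w s(u, v)) →
          ∀ x y, d x y ≤ dPhi G Φ w x y)) ∧
    ((∃ dm : V → V → ℝ≥0,
        (IsPseudoSemimetricWith Φ dm ∧ ∀ u v, G.Adj u v → dm u v = w s(u, v)) ∧
        ∀ d : V → V → ℝ≥0, IsPseudoSemimetricWith Φ d →
          (∀ u v, G.Adj u v → d u v = w s(u, v)) →
          ∀ x y, d x y ≤ dm x y) → G.Preconnected) := by
  classical
  obtain ⟨d0, hd0, hw0⟩ := hmetr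
  obtain ⟨hcont, hcomm, hmono2, hmono1, hΦ00, hW, hM, hmax⟩ := id hΦ
  set S : V → V → Set ℝ≥0 :=
    fun x y => {r | ∃ p : G.Walk x y, p.IsPath ∧ listPhi Φ (p.edges.map w) = r} with hS
  have hdPhi : ∀ x y, dPhi G Φ w x y = sInf (S x y) := fun _ _ => rfl
  have hmem : ∀ {x y : V} (p : G.Walk x y), p.IsPath →
      dPhi G Φ w x y ≤ listPhi Φ (p.edges.map w) := fun p hp =>
    csInf_le (OrderBot.bddBelow _) ⟨p, hp, rfl⟩
  have hsubset : ∀ x y, S x y ⊆ S y x := by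
    rintro x y r ⟨p, hp, rfl⟩
    refine ⟨p.reverse, hp.reverse, ?_⟩
    rw [Walk.edges_reverse, List.map_reverse]
    exact listPhi_perm_s10 Φ hΦ (List.reverse_perm _)
  have hsym : ∀ x y, dPhi G Φ w x y = dPhi G Φ w y x := fun x y => by
    rw [hdPhi, hdPhi, (hsubset x y).antisymm (hsubset y x)]
  have hdiag : ∀ x, dPhi G Φ w x x = 0 := fun x =>
    le_antisymm (by simpa [listPhi] using hmem (Walk.nil : G.Walk x x) Walk.IsPath.nil)
      zero_le
  constructor
  · intro hpre
    have hSne : ∀ x y, (S x y).Nonempty := fun x y => by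
      obtain ⟨p⟩ := hpre x y
      exact ⟨_, p.bypass, p.bypass_isPath, rfl⟩
    have hgreat : ∀ d : V → V → ℝ≥0, IsPseudoSemimetricWith Φ d →
        (∀ u v, G.Adj u v → d u v = w s(u, v)) →
        ∀ x y, d x y ≤ dPhi G Φ w x y := by
      intro d hd hw' x y
      rw [hdPhi]
      refine le_csInf (hSne x y) ?_
      rintro r ⟨p, hp, rfl⟩
      exact d_le_walk hΦ hd hw' p
    have hext : ∀ u v, G.Adj u v → dPhi G Φ w u v = w s(u, v) := by
      intro u v h
      refine le_antisymm ?_ ?_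
      · have hp : (Walk.cons h (Walk.nil : G.Walk v v)).IsPath := by simp [h.ne]
        simpa [listPhi, PhiStar] using hmem _ hp
      · calc w s(u, v) = d0 u v := (hw0 u v h).symm
          _ ≤ dPhi G Φ w u v := hgreat d0 hd0 hw0 u v
    have htri : ∀ x y z, dPhi G Φ w x y ≤ Φ (dPhi G Φ w x z) (dPhi G Φ w y z) := by
      intro x y z
      have key : ∀ s ∈ S x z, ∀ t ∈ S y z, dPhi G Φ w x y ≤ Φ s t := by
        rintro s ⟨p1, hp1, rfl⟩ t ⟨p2, hp2, rfl⟩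
        rcases hq1 : p1.edges with _ | ⟨e1, l1⟩
        · obtain rfl : x = z :=
            Walk.eq_of_length_eq_zero (by rw [← Walk.length_edges, hq1]; rfl)
          have h1 : dPhi G Φ w x y ≤ listPhi Φ (p2.edges.map w) := by
            rw [hsym x y]; exact hmem p2 hp2
          refine h1.trans (le_trans (le_max_right _ _) (hmax _ _))
        · rcases hq2 : p2.edges with _ | ⟨e2, l2⟩
          · obtain rfl : y = z :=
              Walk.eq_of_length_eq_zero (by rw [← Walk.length_edges, hq2]; rfl)
            have h1 : dPhi G Φ w x y ≤ listPhi Φ (p1.edges.map w) := hmem p1 hp1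
            rw [hq1] at h1
            exact h1.trans (le_trans (le_max_left _ _) (hmax _ _))
          · set q : G.Walk x y := p1.append p2.reverse with hqdef
            rcases hP : q.bypass.edges with _ | ⟨e0, l0⟩
            · obtain rfl : x = y :=
                Walk.eq_of_length_eq_zero (by rw [← Walk.length_edges, hP]; rfl)
              rw [hdiag]; exact zero_le
            · have h1 : ((q.bypass.edges : List (Sym2 V)) : Multiset (Sym2 V)) ≤
                  (q.edges : Multiset (Sym2 V)) :=
                Multiset.coe_le.mpr
                  (List.subperm_of_subset q.bypass_isPath.edges_nodup q.edges_bypass_subset)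
              have h2 : ((q.bypass.edges.map w : List ℝ≥0) : Multiset ℝ≥0) ≤
                  ((p1.edges.map w : List ℝ≥0) : Multiset ℝ≥0) +
                    ((p2.edges.map w : List ℝ≥0) : Multiset ℝ≥0) := by
                have h3 := Multiset.map_le_map (f := w) h1
                rw [Multiset.map_coe, Multiset.map_coe] at h3
                refine h3.trans (le_of_eq ?_)
                rw [hqdef]
                rw [Walk.edges_append, Walk.edges_reverse, List.map_append, List.map_reverse,
                  ← Multiset.coe_add]
                congr 1
                exact Multiset.coe_reverse _
              rw [hP, hq1, hq2] at h2
              simp only [List.map_cons, ← Multiset.cons_coe] at h2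
              have h4 := hM (w e0) (w e1) (w e2) (l0.map w) (l1.map w) (l2.map w) h2
              have h5 : dPhi G Φ w x y ≤ listPhi Φ (q.bypass.edges.map w) :=
                hmem q.bypass q.bypass_isPath
              rw [hP] at h5
              exact h5.trans h4
      have h1 : sInf (S x z) ∈ closure (S x z) :=
        csInf_mem_closure (hSne x z) (OrderBot.bddBelow _)
      have h2 : sInf (S y z) ∈ closure (S y z) :=
        csInf_mem_closure (hSne y z) (OrderBot.bddBelow _)
      have hcl : IsClosed {p : ℝ≥0 × ℝ≥0 | dPhi G Φ w x y ≤ Φ p.1 p.2} :=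
        isClosed_le continuous_const hcont
      have hsub : S x z ×ˢ S y z ⊆ {p : ℝ≥0 × ℝ≥0 | dPhi G Φ w x y ≤ Φ p.1 p.2} :=
        fun p hp => key p.1 hp.1 p.2 hp.2
      have hmemcl : (sInf (S x z), sInf (S y z)) ∈ closure (S x z ×ˢ S y z) := by
        rw [closure_prod_eq]; exact ⟨h1, h2⟩
      have := closure_minimal hsub hcl hmemcl
      simpa [hdPhi] using this
    exact ⟨⟨hsym, hdiag, htri⟩, hext, hgreat⟩
  · rintro ⟨dm, ⟨hdm, hdmw⟩, hgr⟩ u v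
    by_contra hr
    set K : ℝ≥0 := dm u v + 1 with hK
    set f : V → V → ℝ≥0 :=
      fun x y => if G.Reachable x y then d0 x y else max (d0 x y) K with hf
    have hfd : ∀ x y, d0 x y ≤ f x y := by
      intro x y
      by_cases h : G.Reachable x y
      · simp [hf, h]
      · simp only [hf]; rw [if_neg h]; exact le_max_left _ _
    have hfsymm : ∀ x y, f x y = f y x := by
      intro x y
      simp only [hf]
      by_cases h : G.Reachable x y
      · rw [if_pos h, if_pos h.symm, hd0.1]
      · rw [if_neg h, if_neg (fun h' => h h'.symm), hd0.1]
    have hfdiag : ∀ x, f x x = 0 := fun x => by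
      simp only [hf]; rw [if_pos (show G.Reachable x x from ⟨Walk.nil⟩)]; exact hd0.2.1 x
    have hftri : ∀ x y z, f x y ≤ Φ (f x z) (f y z) := by
      intro x y z
      have base : d0 x y ≤ Φ (f x z) (f y z) :=
        (hd0.2.2 x y z).trans ((hmono1 (d0 y z) (hfd x z)).trans (hmono2 (f x z) (hfd y z)))
      by_cases h : G.Reachable x y
      · simp only [hf]; rw [if_pos h]; exact base
      · have hK' : K ≤ Φ (f x z) (f y z) := by
          by_cases h1 : G.Reachable x z
          · have h2 : ¬G.Reachable y z := fun h2 => h (h1.trans h2.symm)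
            have hy : K ≤ f y z := by
              simp only [hf]; rw [if_neg h2]; exact le_max_right _ _
            exact hy.trans ((le_max_right _ _).trans (hmax _ _))
          · have hx : K ≤ f x z := by
              simp only [hf]; rw [if_neg h1]; exact le_max_right _ _
            exact hx.trans ((le_max_left _ _).trans (hmax _ _))
        simp only [hf]; rw [if_neg h]
        exact max_le base hK'
    have hfw : ∀ a b, G.Adj a b → f a b = w s(a, b) := by
      intro a b hab
      simp only [hf]; rw [if_pos hab.reachable]; exact hw0 a b hab
    have hle : f u v ≤ dm u v := hgr f ⟨hfsymm, hfdiag, hftri⟩ hfw u v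
    have hfu : K ≤ f u v := by
      simp only [hf]; rw [if_neg hr]; exact le_max_right _ _
    have : dm u v + 1 ≤ dm u v := hK ▸ (hfu.trans hle)
    exact absurd this (not_le.mpr (lt_add_of_pos_right _ one_pos))
end
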